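/- For every parameter vector z ∈ ℝ⁴ and every point x ∈ ℝ⁴, the map τ_z is an isometry of the McLenaghan–Tariq–Tupper metric: for all indices i, j ∈ {1,2,3,4}, Σ_{k,l} g_{kl}(τ_z(x)) · (∂τ_z^k/∂x^i)(x) · (∂τ_z^l/∂x^j)(x) = g_{ij}(x). -/
import Mathlib


/-- Partial derivative `∂f/∂xⁱ` of a real-valued function on `ℝ⁴`. -/
noncomputable def pd (i : Fin 4) (f : (Fin 4 → ℝ) → ℝ) (x : Fin 4 → ℝ) : ℝ :=
  fderiv ℝ f x (Pi.single i 1)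
/-- The McLenaghan–Tariq–Tupper metric components `g_{ij}(x)` (indices `0,…,3` for `1,…,4`). -/
noncomputable def mttMetric (k : ℝ) (x : Fin 4 → ℝ) : Matrix (Fin 4) (Fin 4) ℝ :=
  !![1, 1, 0, -k * x 2;
     1, 0, 0, -k * x 2;
     0, 0, -Real.exp (-(k * x 1)), 0;
     -k * x 2, -k * x 2, 0, k ^ 2 * (x 2) ^ 2 - Real.exp (k * x 1)]
/-- The transformation `τ_z : ℝ⁴ → ℝ⁴` (indices `0,…,3` for coordinates `1,…,4`). -/
noncomputable def τ (k : ℝ) (z x : Fin 4 → ℝ) : Fin 4 → ℝ :=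
  ![x 0 - z 0 + 2 * z 3 - k * Real.exp (k * z 3 / 2) * z 2 * x 3,
    x 1 - z 3,
    x 2 * Real.exp (-(k * z 3) / 2) - z 2,
    x 3 * Real.exp (k * z 3 / 2) - z 1]

lemma pd_lin (i : Fin 4) (a b c d e : ℝ) (x : Fin 4 → ℝ) :
    pd i (fun y => a * y 0 + b * y 1 + c * y 2 + d * y 3 + e) x = ![a,b,c,d] i := by
  set L : (Fin 4 → ℝ) →L[ℝ] ℝ :=
    a • ContinuousLinearMap.proj 0 + b • ContinuousLinearMap.proj 1 +
    c • ContinuousLinearMap.proj 2 + d • ContinuousLinearMap.proj 3 with hL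
  have h0 := (L.hasFDerivAt (x := x)).add_const e
  have heq : (fun y : Fin 4 → ℝ => L y + e)
      = fun y : Fin 4 → ℝ => a * y 0 + b * y 1 + c * y 2 + d * y 3 + e := by
    funext y; simp [hL, smul_eq_mul]
  rw [heq] at h0
  unfold pd
  rw [h0.fderiv]
  fin_cases i <;> simp [hL, Pi.single_apply, smul_eq_mul]

lemma pd_tau0 (k : ℝ) (z x : Fin 4 → ℝ) (i : Fin 4) :
    pd i (fun y => τ k z y 0) x = ![1, 0, 0, -(k * Real.exp (k * z 3 / 2) * z 2)] i := by
  rw [show (fun y => τ k z y 0)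
      = fun y : Fin 4 → ℝ => 1 * y 0 + 0 * y 1 + 0 * y 2
        + (-(k * Real.exp (k * z 3 / 2) * z 2)) * y 3 + (-z 0 + 2 * z 3) by
    funext y; simp [τ]; ring]
  exact pd_lin i _ _ _ _ _ x

lemma pd_tau1 (k : ℝ) (z x : Fin 4 → ℝ) (i : Fin 4) :
    pd i (fun y => τ k z y 1) x = ![0, 1, 0, 0] i := by
  rw [show (fun y => τ k z y 1)
      = fun y : Fin 4 → ℝ => 0 * y 0 + 1 * y 1 + 0 * y 2 + 0 * y 3 + (-z 3) by
    funext y; simp [τ]; ring]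
  exact pd_lin i _ _ _ _ _ x

lemma pd_tau2 (k : ℝ) (z x : Fin 4 → ℝ) (i : Fin 4) :
    pd i (fun y => τ k z y 2) x = ![0, 0, Real.exp (-(k * z 3) / 2), 0] i := by
  rw [show (fun y => τ k z y 2)
      = fun y : Fin 4 → ℝ => 0 * y 0 + 0 * y 1 + Real.exp (-(k * z 3) / 2) * y 2
        + 0 * y 3 + (-z 2) by
    funext y; simp [τ]; ring]
  exact pd_lin i _ _ _ _ _ x

lemma pd_tau3 (k : ℝ) (z x : Fin 4 → ℝ) (i : Fin 4) :
    pd i (fun y => τ k z y 3) x = ![0, 0, 0, Real.exp (k * z 3 / 2)] i := by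
  rw [show (fun y => τ k z y 3)
      = fun y : Fin 4 → ℝ => 0 * y 0 + 0 * y 1 + 0 * y 2
        + Real.exp (k * z 3 / 2) * y 3 + (-z 1) by
    funext y; simp [τ]; ring]
  exact pd_lin i _ _ _ _ _ x

/-- Every `τ_z` is an isometry of the McLenaghan–Tariq–Tupper metric:
`Σ_{k,l} g_{kl}(τ_z x) ∂_i τ_z^k ∂_j τ_z^l = g_{ij}(x)`. -/
theorem tau_isometry (k : ℝ) (hk : 0 < k) (z x : Fin 4 → ℝ) (i j : Fin 4) :
    ∑ a : Fin 4, ∑ b : Fin 4,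
      mttMetric k (τ k z x) a b * pd i (fun y => τ k z y a) x * pd j (fun y => τ k z y b) x
      = mttMetric k x i j := by
  have hE : Real.exp (-(k * z 3) / 2) = (Real.exp (k * z 3 / 2))⁻¹ := by
    rw [← Real.exp_neg]; ring_nf
  have hA : Real.exp (-(k * (x 1 - z 3)))
      = Real.exp (-(k * x 1)) * Real.exp (k * z 3 / 2) ^ 2 := by
    rw [pow_two, ← Real.exp_add, ← Real.exp_add]; ring_nf
  have hB : Real.exp (k * (x 1 - z 3))
      = Real.exp (k * x 1) * ((Real.exp (k * z 3 / 2))⁻¹) ^ 2 := by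
    rw [← Real.exp_neg, pow_two, ← Real.exp_add, ← Real.exp_add]; ring_nf
  have hne := Real.exp_ne_zero (k * z 3 / 2)
  fin_cases i <;> fin_cases j <;>
    simp only [pd_tau0, pd_tau1, pd_tau2, pd_tau3, Fin.sum_univ_four] <;>
    simp [mttMetric, τ, hE, hA, hB] <;>
    field_simp <;> ring
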